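/- The product x y z is constant along trajectories of P: if I ⊆ ℝ is an interval and γ = (γ₁, γ₂, γ₃) : I → ℝ³ is differentiable with γ'(t) = P(γ(t)) for all t ∈ I, then the function t ↦ γ₁(t)·γ₂(t)·γ₃(t) is constant on I. Equivalently, for all real x, y, z one has x y · P₃(x,y,z) + x z · P₂(x,y,z) + y z · P₁(x,y,z) = 0. -/

import Mathlib

open Filter Set Topology

noncomputable section

/-- The rock–paper–scissors vector field `P` on `ℝ³`, with components
`P₁(x,y,z) = x(z-y)/2`, `P₂(x,y,z) = y(x-z)/2`, `P₃(x,y,z) = z(y-x)/2`. -/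
def Pfield : ℝ × ℝ × ℝ → ℝ × ℝ × ℝ :=
  fun p => (p.1 * (p.2.2 - p.2.1) / 2, p.2.1 * (p.1 - p.2.2) / 2, p.2.2 * (p.2.1 - p.1) / 2)

/-- The simplex `Δ² = {(x,y,z) : x,y,z ≥ 0, x+y+z = 1}`. -/
def simplex2 : Set (ℝ × ℝ × ℝ) :=
  {p | 0 ≤ p.1 ∧ 0 ≤ p.2.1 ∧ 0 ≤ p.2.2 ∧ p.1 + p.2.1 + p.2.2 = 1}

lemma prod_deriv_zero (γ : ℝ → ℝ × ℝ × ℝ) (t : ℝ)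
    (h : HasDerivAt γ (Pfield (γ t)) t) :
    HasDerivAt (fun u => (γ u).1 * (γ u).2.1 * (γ u).2.2) 0 t := by
  have h1 : HasDerivAt (fun u => (γ u).1) (Pfield (γ t)).1 t :=
    (ContinuousLinearMap.fst ℝ ℝ (ℝ × ℝ)).hasFDerivAt.comp_hasDerivAt t h
  have h23 : HasDerivAt (fun u => (γ u).2) (Pfield (γ t)).2 t :=
    (ContinuousLinearMap.snd ℝ ℝ (ℝ × ℝ)).hasFDerivAt.comp_hasDerivAt t h
  have h2 : HasDerivAt (fun u => (γ u).2.1) (Pfield (γ t)).2.1 t :=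
    (ContinuousLinearMap.fst ℝ ℝ ℝ).hasFDerivAt.comp_hasDerivAt t h23
  have h3 : HasDerivAt (fun u => (γ u).2.2) (Pfield (γ t)).2.2 t :=
    (ContinuousLinearMap.snd ℝ ℝ ℝ).hasFDerivAt.comp_hasDerivAt t h23
  have : HasDerivAt (fun u => (γ u).1 * (γ u).2.1 * (γ u).2.2) _ t := (h1.mul h2).mul h3
  convert this using 1
  simp only [Pfield, Pi.mul_apply]
  ring

/-- The product `xyz` is constant along trajectories of `P`; equivalently
`xy·P₃ + xz·P₂ + yz·P₁ = 0` identically. -/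
theorem rps_product_invariant :
    (∀ x y z : ℝ,
      x * y * (z * (y - x) / 2) + x * z * (y * (x - z) / 2) + y * z * (x * (z - y) / 2) = 0) ∧
    (∀ I : Set ℝ, I.OrdConnected →
      ∀ γ : ℝ → ℝ × ℝ × ℝ, (∀ t ∈ I, HasDerivAt γ (Pfield (γ t)) t) →
      ∀ s ∈ I, ∀ t ∈ I,
        (γ s).1 * (γ s).2.1 * (γ s).2.2 = (γ t).1 * (γ t).2.1 * (γ t).2.2) := by
  constructor
  · intro x y z; ring
  · intro I hI γ hγ s hs t ht
    -- main lemma: for a ≤ b in I, values agree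
    have key : ∀ a ∈ I, ∀ b ∈ I, a ≤ b →
        (γ a).1 * (γ a).2.1 * (γ a).2.2 = (γ b).1 * (γ b).2.1 * (γ b).2.2 := by
      intro a ha b hb hab
      have hsub : Icc a b ⊆ I := hI.out ha hb
      have hderiv : ∀ u ∈ Icc a b,
          HasDerivAt (fun v => (γ v).1 * (γ v).2.1 * (γ v).2.2) 0 u :=
        fun u hu => prod_deriv_zero γ u (hγ u (hsub hu))
      have hcont : ContinuousOn (fun v => (γ v).1 * (γ v).2.1 * (γ v).2.2) (Icc a b) :=
        fun u hu => ((hderiv u hu).continuousAt).continuousWithinAt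
      have := constant_of_has_deriv_right_zero hcont
        (fun u hu => ((hderiv u (Ico_subset_Icc_self hu)).hasDerivWithinAt))
        b (right_mem_Icc.mpr hab)
      exact this.symm
    rcases le_total s t with h | h
    · exact key s hs t ht h
    · exact (key t ht s hs h).symm
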